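/- Let a, b, c be real numbers with a² + b² < c². Then for all (x,y) ∈ ℝ², the first fundamental form of F_{a,b,c} is given by ⟨∂_x F_{a,b,c}(x,y), ∂_x F_{a,b,c}(x,y)⟩ = (1/2)(c² + (b²−a²)cos 2y), ⟨∂_x F_{a,b,c}(x,y), ∂_y F_{a,b,c}(x,y)⟩ = 0, and ⟨∂_y F_{a,b,c}(x,y), ∂_y F_{a,b,c}(x,y)⟩ = (c² + (b²−a²)cos 2y)/(2c² − a² − b² + (b²−a²)cos 2y), where the inner products are taken in ℝ⁶ ≅ ℂ³. -/

import Mathlib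

open Real

open scoped RealInnerProductSpace

noncomputable def genLawson (a b c : ℝ) : ℝ × ℝ → EuclideanSpace ℝ (Fin 6) := fun p =>
  WithLp.toLp 2 ![Real.sqrt ((b^2 + c^2 - a^2) / (2 * (c^2 - a^2))) * Real.cos (a * p.1) * Real.sin p.2,
    Real.sqrt ((b^2 + c^2 - a^2) / (2 * (c^2 - a^2))) * Real.sin (a * p.1) * Real.sin p.2,
    Real.sqrt ((a^2 + c^2 - b^2) / (2 * (c^2 - b^2))) * Real.cos (b * p.1) * Real.cos p.2,
    Real.sqrt ((a^2 + c^2 - b^2) / (2 * (c^2 - b^2))) * Real.sin (b * p.1) * Real.cos p.2,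
    Real.sqrt ((c^2 - a^2 - b^2) / (2 * (c^2 - b^2))) * Real.cos (c * p.1) *
      Real.sqrt (1 - (b^2 - a^2) / (c^2 - a^2) * Real.sin p.2 ^ 2),
    Real.sqrt ((c^2 - a^2 - b^2) / (2 * (c^2 - b^2))) * Real.sin (c * p.1) *
      Real.sqrt (1 - (b^2 - a^2) / (c^2 - a^2) * Real.sin p.2 ^ 2)]

private lemma vec6_at5 {α : Type*} (x0 x1 x2 x3 x4 x5 : α) :
    ![x0, x1, x2, x3, x4, x5] (5 : Fin 6) = x5 := rfl

private lemma lawson_mul_fderiv {f g : ℝ → ℝ} {f' g' : ℝ} {x y : ℝ}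
    (hf : HasDerivAt f f' x) (hg : HasDerivAt g g' y) :
    HasFDerivAt (fun p : ℝ × ℝ => f p.1 * g p.2)
      ((f' * g y) • ContinuousLinearMap.fst ℝ ℝ ℝ +
        (f x * g') • ContinuousLinearMap.snd ℝ ℝ ℝ) (x, y) := by
  have h1 : HasFDerivAt (fun p : ℝ × ℝ => f p.1)
      (f' • ContinuousLinearMap.fst ℝ ℝ ℝ) (x, y) := by
    refine (hf.hasFDerivAt.comp (x, y) (hasFDerivAt_fst (p := (x, y)))).congr_fderiv ?_
    refine ContinuousLinearMap.ext fun v => ?_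
    simp [mul_comm]
  have h2 : HasFDerivAt (fun p : ℝ × ℝ => g p.2)
      (g' • ContinuousLinearMap.snd ℝ ℝ ℝ) (x, y) := by
    refine (hg.hasFDerivAt.comp (x, y) (hasFDerivAt_snd (p := (x, y)))).congr_fderiv ?_
    refine ContinuousLinearMap.ext fun v => ?_
    simp [mul_comm]
  have h3 := h1.mul h2
  refine h3.congr_fderiv ?_
  refine ContinuousLinearMap.ext fun v => ?_
  simp
  ring

private lemma hasDerivAt_kcos (k m x : ℝ) :
    HasDerivAt (fun t => k * Real.cos (m * t)) (-(k * m * Real.sin (m * x))) x := by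
  have h : HasDerivAt (fun t : ℝ => m * t) m x := by
    simpa using (hasDerivAt_id x).const_mul m
  have h2 := ((Real.hasDerivAt_cos (m * x)).comp x h).const_mul k
  exact h2.congr_deriv (by ring)

private lemma hasDerivAt_ksin (k m x : ℝ) :
    HasDerivAt (fun t => k * Real.sin (m * t)) (k * m * Real.cos (m * x)) x := by
  have h : HasDerivAt (fun t : ℝ => m * t) m x := by
    simpa using (hasDerivAt_id x).const_mul m
  have h2 := ((Real.hasDerivAt_sin (m * x)).comp x h).const_mul k
  exact h2.congr_deriv (by ring)

set_option maxHeartbeats 1600000 in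
/-- The first fundamental form of `F_{a,b,c}`:
`⟨∂ₓF,∂ₓF⟩ = (1/2)(c²+(b²−a²)cos 2y)`, `⟨∂ₓF,∂_yF⟩ = 0`, and
`⟨∂_yF,∂_yF⟩ = (c²+(b²−a²)cos 2y)/(2c²−a²−b²+(b²−a²)cos 2y)`. -/
theorem genLawson_first_fundamental_form (a b c : ℝ) (h : a^2 + b^2 < c^2) (x y : ℝ) :
    ⟪fderiv ℝ (genLawson a b c) (x, y) (1, 0), fderiv ℝ (genLawson a b c) (x, y) (1, 0)⟫
        = 1 / 2 * (c^2 + (b^2 - a^2) * Real.cos (2 * y)) ∧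
    ⟪fderiv ℝ (genLawson a b c) (x, y) (1, 0), fderiv ℝ (genLawson a b c) (x, y) (0, 1)⟫
        = 0 ∧
    ⟪fderiv ℝ (genLawson a b c) (x, y) (0, 1), fderiv ℝ (genLawson a b c) (x, y) (0, 1)⟫
        = (c^2 + (b^2 - a^2) * Real.cos (2 * y))
            / (2 * c^2 - a^2 - b^2 + (b^2 - a^2) * Real.cos (2 * y)) := by
  have hca : (0:ℝ) < c^2 - a^2 := by nlinarith [sq_nonneg b]
  have hcb : (0:ℝ) < c^2 - b^2 := by nlinarith [sq_nonneg a]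
  have hs1 : Real.sin y ^ 2 ≤ 1 := Real.sin_sq_le_one y
  have hNpos : (0:ℝ) < c^2 - a^2 - (b^2 - a^2) * Real.sin y ^ 2 := by
    nlinarith [sq_nonneg (Real.sin y), mul_nonneg (sub_nonneg.2 hs1) hca.le]
  have hupos : (0:ℝ) < 1 - (b^2 - a^2) / (c^2 - a^2) * Real.sin y ^ 2 := by
    have : 1 - (b^2 - a^2) / (c^2 - a^2) * Real.sin y ^ 2
        = (c^2 - a^2 - (b^2 - a^2) * Real.sin y ^ 2) / (c^2 - a^2) := by
      field_simp
    rw [this]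
    exact div_pos hNpos hca
  set A : ℝ := Real.sqrt ((b^2 + c^2 - a^2) / (2 * (c^2 - a^2))) with hA
  set B : ℝ := Real.sqrt ((a^2 + c^2 - b^2) / (2 * (c^2 - b^2))) with hB
  set C : ℝ := Real.sqrt ((c^2 - a^2 - b^2) / (2 * (c^2 - b^2))) with hC
  set W : ℝ := Real.sqrt (1 - (b^2 - a^2) / (c^2 - a^2) * Real.sin y ^ 2) with hW
  set W' : ℝ := -((b^2 - a^2) / (c^2 - a^2) * (2 * Real.sin y * Real.cos y)) / (2 * W) with hW'
  have h1 := Real.sin_sq_add_cos_sq (a * x)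
  have h2 := Real.sin_sq_add_cos_sq (b * x)
  have h3 := Real.sin_sq_add_cos_sq (c * x)
  have hsy := Real.sin_sq_add_cos_sq y
  have hCy2 : Real.cos y ^ 2 = 1 - Real.sin y ^ 2 := by linarith
  have hcos2 : Real.cos (2 * y) = 1 - 2 * Real.sin y ^ 2 := by
    rw [Real.cos_two_mul]; linarith
  have hA2 : A ^ 2 = (b^2 + c^2 - a^2) / (2 * (c^2 - a^2)) :=
    Real.sq_sqrt (div_nonneg (by nlinarith [sq_nonneg b]) (by nlinarith))
  have hB2 : B ^ 2 = (a^2 + c^2 - b^2) / (2 * (c^2 - b^2)) :=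
    Real.sq_sqrt (div_nonneg (by nlinarith [sq_nonneg a]) (by nlinarith))
  have hC2 : C ^ 2 = (c^2 - a^2 - b^2) / (2 * (c^2 - b^2)) :=
    Real.sq_sqrt (div_nonneg (by nlinarith) (by nlinarith))
  have hW2 : W ^ 2 = 1 - (b^2 - a^2) / (c^2 - a^2) * Real.sin y ^ 2 :=
    Real.sq_sqrt hupos.le
  have hden : 2 * c^2 - a^2 - b^2 + (b^2 - a^2) * (1 - 2 * Real.sin y ^ 2) ≠ 0 := by
    nlinarith [hNpos]
  have hW'sq : W' ^ 2 = ((b^2 - a^2) / (c^2 - a^2))^2 *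
      (Real.sin y ^ 2 * (1 - Real.sin y ^ 2)) /
      (1 - (b^2 - a^2) / (c^2 - a^2) * Real.sin y ^ 2) := by
    rw [hW', div_pow, neg_sq, show ((2:ℝ) * W)^2 = 4 * W^2 by ring, hW2, ← hCy2]
    field_simp [hupos.ne']
    ring
  -- derivative of the W-function
  have hgW : HasDerivAt (fun t => Real.sqrt (1 - (b^2 - a^2) / (c^2 - a^2) * Real.sin t ^ 2)) W' y := by
    have hs : HasDerivAt (fun t => Real.sin t ^ 2) (2 * Real.sin y * Real.cos y) y := by
      have := (Real.hasDerivAt_sin y).pow 2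
      exact this.congr_deriv (by simp [pow_one])
    have hu : HasDerivAt (fun t => 1 - (b^2 - a^2) / (c^2 - a^2) * Real.sin t ^ 2)
        (-((b^2 - a^2) / (c^2 - a^2) * (2 * Real.sin y * Real.cos y))) y := by
      have := (hasDerivAt_const y (1:ℝ)).sub (hs.const_mul ((b^2 - a^2) / (c^2 - a^2)))
      exact this.congr_deriv (by ring)
    have := hu.sqrt (ne_of_gt hupos)
    convert this using 1
  -- the six component linear maps
  set L : Fin 6 → (ℝ × ℝ →L[ℝ] ℝ) :=
    ![(-(A * a * Real.sin (a * x)) * Real.sin y) • ContinuousLinearMap.fst ℝ ℝ ℝ +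
        (A * Real.cos (a * x) * Real.cos y) • ContinuousLinearMap.snd ℝ ℝ ℝ,
      (A * a * Real.cos (a * x) * Real.sin y) • ContinuousLinearMap.fst ℝ ℝ ℝ +
        (A * Real.sin (a * x) * Real.cos y) • ContinuousLinearMap.snd ℝ ℝ ℝ,
      (-(B * b * Real.sin (b * x)) * Real.cos y) • ContinuousLinearMap.fst ℝ ℝ ℝ +
        (B * Real.cos (b * x) * -Real.sin y) • ContinuousLinearMap.snd ℝ ℝ ℝ,
      (B * b * Real.cos (b * x) * Real.cos y) • ContinuousLinearMap.fst ℝ ℝ ℝ +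
        (B * Real.sin (b * x) * -Real.sin y) • ContinuousLinearMap.snd ℝ ℝ ℝ,
      (-(C * c * Real.sin (c * x)) * W) • ContinuousLinearMap.fst ℝ ℝ ℝ +
        (C * Real.cos (c * x) * W') • ContinuousLinearMap.snd ℝ ℝ ℝ,
      (C * c * Real.cos (c * x) * W) • ContinuousLinearMap.fst ℝ ℝ ℝ +
        (C * Real.sin (c * x) * W') • ContinuousLinearMap.snd ℝ ℝ ℝ] with hL
  have hf : HasFDerivAt (fun p : ℝ × ℝ =>
      (![A * Real.cos (a * p.1) * Real.sin p.2,
         A * Real.sin (a * p.1) * Real.sin p.2,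
         B * Real.cos (b * p.1) * Real.cos p.2,
         B * Real.sin (b * p.1) * Real.cos p.2,
         C * Real.cos (c * p.1) * Real.sqrt (1 - (b^2 - a^2) / (c^2 - a^2) * Real.sin p.2 ^ 2),
         C * Real.sin (c * p.1) * Real.sqrt (1 - (b^2 - a^2) / (c^2 - a^2) * Real.sin p.2 ^ 2)]
        : Fin 6 → ℝ)) (ContinuousLinearMap.pi L) (x, y) := by
    refine hasFDerivAt_pi'' fun i => ?_
    rw [ContinuousLinearMap.proj_pi]
    fin_cases i <;>
      simp only [hL, Matrix.cons_val_zero, Matrix.cons_val_one, Matrix.head_cons,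
        Matrix.cons_val_two, Matrix.tail_cons, Matrix.cons_val_three, Matrix.cons_val_four,
        Fin.mk_one, Fin.isValue]
    · exact lawson_mul_fderiv (hasDerivAt_kcos A a x) (Real.hasDerivAt_sin y)
    · exact lawson_mul_fderiv (hasDerivAt_ksin A a x) (Real.hasDerivAt_sin y)
    · exact lawson_mul_fderiv (hasDerivAt_kcos B b x) (Real.hasDerivAt_cos y)
    · exact lawson_mul_fderiv (hasDerivAt_ksin B b x) (Real.hasDerivAt_cos y)
    · exact lawson_mul_fderiv (hasDerivAt_kcos C c x) hgW
    · exact lawson_mul_fderiv (hasDerivAt_ksin C c x) hgW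
  have hG : HasFDerivAt (genLawson a b c)
      (((PiLp.continuousLinearEquiv 2 ℝ (fun _ : Fin 6 => ℝ)).symm.toContinuousLinearMap).comp
        (ContinuousLinearMap.pi L)) (x, y) :=
    ((PiLp.continuousLinearEquiv 2 ℝ (fun _ : Fin 6 => ℝ)).symm.toContinuousLinearMap.hasFDerivAt).comp
      (x, y) hf
  have hfd := hG.fderiv
  rw [hfd]
  refine ⟨?_, ?_, ?_⟩ <;>
    simp only [PiLp.inner_apply, RCLike.inner_apply, conj_trivial, Fin.sum_univ_six,
      ContinuousLinearMap.coe_comp', Function.comp_apply,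
      ContinuousLinearEquiv.coe_coe, PiLp.continuousLinearEquiv_symm_apply,
      PiLp.toLp_apply, ContinuousLinearMap.pi_apply, hL,
      Matrix.cons_val_zero, Matrix.cons_val_one, Matrix.head_cons,
      Matrix.cons_val_two, Matrix.tail_cons, Matrix.cons_val_three, Matrix.cons_val_four,
      vec6_at5, ContinuousLinearMap.add_apply, ContinuousLinearMap.coe_smul', Pi.smul_apply,
      ContinuousLinearMap.coe_fst', ContinuousLinearMap.coe_snd', smul_eq_mul,
      mul_one, mul_zero, add_zero, zero_add]
  · -- E = <Fx,Fx>
    have key1 : -(A * a * Real.sin (a * x)) * Real.sin y * (-(A * a * Real.sin (a * x)) * Real.sin y) +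
          A * a * Real.cos (a * x) * Real.sin y * (A * a * Real.cos (a * x) * Real.sin y) +
          -(B * b * Real.sin (b * x)) * Real.cos y * (-(B * b * Real.sin (b * x)) * Real.cos y) +
          B * b * Real.cos (b * x) * Real.cos y * (B * b * Real.cos (b * x) * Real.cos y) +
          -(C * c * Real.sin (c * x)) * W * (-(C * c * Real.sin (c * x)) * W) +
          C * c * Real.cos (c * x) * W * (C * c * Real.cos (c * x) * W)
        = a^2 * A^2 * Real.sin y ^ 2 + b^2 * B^2 * Real.cos y ^ 2 + c^2 * C^2 * W^2 := by
      linear_combination (a * A * Real.sin y)^2 * h1 + (b * B * Real.cos y)^2 * h2 +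
        (c * C * W)^2 * h3
    rw [key1, hCy2, hA2, hB2, hC2, hW2, hcos2]
    field_simp
    ring
  · ring
  · -- G = <Fy,Fy>
    have key3 : A * Real.cos (a * x) * Real.cos y * (A * Real.cos (a * x) * Real.cos y) +
          A * Real.sin (a * x) * Real.cos y * (A * Real.sin (a * x) * Real.cos y) +
          B * Real.cos (b * x) * -Real.sin y * (B * Real.cos (b * x) * -Real.sin y) +
          B * Real.sin (b * x) * -Real.sin y * (B * Real.sin (b * x) * -Real.sin y) +
          C * Real.cos (c * x) * W' * (C * Real.cos (c * x) * W') +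
          C * Real.sin (c * x) * W' * (C * Real.sin (c * x) * W')
        = A^2 * Real.cos y ^ 2 + B^2 * Real.sin y ^ 2 + C^2 * W' ^ 2 := by
      linear_combination (A * Real.cos y)^2 * h1 + (B * Real.sin y)^2 * h2 + (C * W')^2 * h3
    rw [key3, hCy2, hA2, hB2, hC2, hW'sq, hcos2]
    field_simp [hca.ne', hcb.ne', hupos.ne', hden,
      (by nlinarith : c^2 - a^2 - Real.sin y ^ 2 * (b^2 - a^2) ≠ 0),
      (by nlinarith : c^2 * 2 - a^2 - b^2 + (b^2 - a^2) * (1 - 2 * Real.sin y ^ 2) ≠ 0)]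
    ring
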